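/- Let Z be a binomial random variable with parameters n and p, and let s be an integer with 0 < s < n and p ≥ s/n. Then P(Z ≤ s) ≤ s^{-s}·n^s·e^s·(1-p)^{n-s}·p^s. -/

import Mathlib

open Finset Real

/-- Chernoff-type bound for the lower tail of a Binomial(n, p) random variable:
if `0 < s < n` and `p ≥ s/n`, then `P(Z ≤ s) ≤ s^{-s} n^s e^s (1-p)^{n-s} p^s`. -/
theorem binomial_lower_tail_bound (n s : ℕ) (p : ℝ) (hs : 0 < s) (hsn : s < n)
    (hp0 : 0 ≤ p) (hp1 : p ≤ 1) (hps : (s : ℝ) / n ≤ p) :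
    ∑ j ∈ Finset.range (s + 1), (n.choose j : ℝ) * p ^ j * (1 - p) ^ (n - j)
      ≤ ((s : ℝ) ^ s)⁻¹ * (n : ℝ) ^ s * Real.exp s * (1 - p) ^ (n - s) * p ^ s := by
  have hn0 : 0 < n := lt_trans hs hsn
  have hnR : (0:ℝ) < n := by exact_mod_cast hn0
  have hsR : (0:ℝ) < s := by exact_mod_cast hs
  have hp_pos : 0 < p := lt_of_lt_of_le (by positivity) hps
  set q : ℝ := 1 - p with hqdef
  have hq0 : 0 ≤ q := by simp only [hqdef]; linarith
  set m : ℕ := n - s with hmdef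
  have hm : 0 < m := Nat.sub_pos_of_lt hsn
  have hmR : (0:ℝ) < m := by exact_mod_cast hm
  have hnsm : n = s + m := by omega
  have hnsmR : (n:ℝ) = (s:ℝ) + (m:ℝ) := by rw [hnsm]; push_cast; ring
  clear_value q m
  rcases eq_or_lt_of_le hq0 with hq' | hq'
  · -- p = 1 : both sides are 0
    have hL : ∑ j ∈ Finset.range (s + 1), (n.choose j : ℝ) * p ^ j * q ^ (n - j) = 0 := by
      apply Finset.sum_eq_zero
      intro j hj
      have hj' : j < s + 1 := Finset.mem_range.mp hj
      have : q ^ (n - j) = 0 := by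
        rw [← hq']
        exact zero_pow (by omega)
      rw [this]; ring
    rw [hL, ← hq', zero_pow hm.ne']
    simp
  -- main case q > 0
  set t : ℝ := s * q / (m * p) with htdef
  have ht0 : 0 < t := by positivity
  have hsnp : (s:ℝ) ≤ n * p := by
    rw [div_le_iff₀ hnR] at hps; linarith [hps]
  have ht1 : t ≤ 1 := by
    rw [htdef, div_le_one (by positivity)]
    have hmm : (m:ℝ) = (n:ℝ) - s := by linarith [hnsmR]
    rw [hmm]
    nlinarith
  clear_value t
  have step1 : ∑ j ∈ Finset.range (s + 1), (n.choose j : ℝ) * p ^ j * q ^ (n - j)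
      ≤ (t⁻¹) ^ s * (p * t + q) ^ n := by
    have hbin : (p * t + q) ^ n
        = ∑ j ∈ Finset.range (n + 1), (p * t) ^ j * q ^ (n - j) * (n.choose j : ℝ) :=
      add_pow (p * t) q n
    calc ∑ j ∈ Finset.range (s + 1), (n.choose j : ℝ) * p ^ j * q ^ (n - j)
        ≤ ∑ j ∈ Finset.range (s + 1),
            (t⁻¹) ^ s * ((p * t) ^ j * q ^ (n - j) * (n.choose j : ℝ)) := by
          apply Finset.sum_le_sum
          intro j hj
          have hjs : j ≤ s := by
            have := Finset.mem_range.mp hj; omega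
          have hts : t ^ s ≤ t ^ j := pow_le_pow_of_le_one ht0.le ht1 hjs
          have h1 : (1:ℝ) ≤ (t⁻¹) ^ s * t ^ j := by
            rw [inv_pow, inv_mul_eq_div, le_div_iff₀ (by positivity), one_mul]
            exact hts
          have hnn : (0:ℝ) ≤ (n.choose j : ℝ) * p ^ j * q ^ (n - j) := by positivity
          calc (n.choose j : ℝ) * p ^ j * q ^ (n - j)
              = ((n.choose j : ℝ) * p ^ j * q ^ (n - j)) * 1 := by ring
            _ ≤ ((n.choose j : ℝ) * p ^ j * q ^ (n - j)) * ((t⁻¹) ^ s * t ^ j) :=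
                mul_le_mul_of_nonneg_left h1 hnn
            _ = (t⁻¹) ^ s * ((p * t) ^ j * q ^ (n - j) * (n.choose j : ℝ)) := by
                rw [mul_pow]; ring
      _ ≤ ∑ j ∈ Finset.range (n + 1),
            (t⁻¹) ^ s * ((p * t) ^ j * q ^ (n - j) * (n.choose j : ℝ)) := by
          apply Finset.sum_le_sum_of_subset_of_nonneg
          · exact Finset.range_subset_range.mpr (by omega)
          · intro j _ _; positivity
      _ = (t⁻¹) ^ s * (p * t + q) ^ n := by
          rw [hbin, Finset.mul_sum]
  have hpt : p * t + q = q * n / m := by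
    rw [htdef, hnsmR]
    field_simp
  have key : ((n:ℝ) / m) ^ m ≤ Real.exp s := by
    have h1 : (n:ℝ) / m = 1 + (s:ℝ) / m := by
      rw [hnsmR]; field_simp; ring
    have h2 : (1 + (s:ℝ) / m) ≤ Real.exp ((s:ℝ) / m) := by
      linarith [Real.add_one_le_exp ((s:ℝ) / m)]
    calc ((n:ℝ)/m)^m = (1 + (s:ℝ)/m)^m := by rw [h1]
      _ ≤ (Real.exp ((s:ℝ)/m))^m := pow_le_pow_left₀ (by positivity) h2 m
      _ = Real.exp ((m:ℕ) * ((s:ℝ)/m)) := (Real.exp_nat_mul _ m).symm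
      _ = Real.exp s := by
          congr 1; field_simp
  have key_eq : (t⁻¹) ^ s * (q * n / m) ^ n
      = ((s : ℝ) ^ s)⁻¹ * p ^ s * q ^ m * (n:ℝ) ^ s * ((n:ℝ) / m) ^ m := by
    have hsplit : (q * (n:ℝ) / m) ^ n = (q * n / m) ^ s * (q * n / m) ^ m := by
      rw [← pow_add]; congr 1
    rw [hsplit, htdef]
    field_simp
    have e1 : (s:ℝ) ^ s * (s:ℝ)⁻¹ ^ s = 1 := by rw [← mul_pow, mul_inv_cancel₀ hsR.ne', one_pow]
    have e2 : q ^ s * q⁻¹ ^ s = 1 := by rw [← mul_pow, mul_inv_cancel₀ hq'.ne', one_pow]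
    have e3 : (m:ℝ) ^ s * (m:ℝ)⁻¹ ^ s = 1 := by rw [← mul_pow, mul_inv_cancel₀ hmR.ne', one_pow]
    linear_combination (p ^ s * q ^ m * (n:ℝ) ^ s * (n:ℝ) ^ m * (m:ℝ)⁻¹ ^ m) *
      ((q ^ s * q⁻¹ ^ s) * ((m:ℝ) ^ s * (m:ℝ)⁻¹ ^ s) * e1 + ((m:ℝ) ^ s * (m:ℝ)⁻¹ ^ s) * e2 + e3)
  calc ∑ j ∈ Finset.range (s + 1), (n.choose j : ℝ) * p ^ j * q ^ (n - j)
      ≤ (t⁻¹) ^ s * (p * t + q) ^ n := step1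
    _ = ((s : ℝ) ^ s)⁻¹ * p ^ s * q ^ m * (n:ℝ) ^ s * ((n:ℝ) / m) ^ m := by
        rw [hpt, key_eq]
    _ ≤ ((s : ℝ) ^ s)⁻¹ * p ^ s * q ^ m * (n:ℝ) ^ s * Real.exp s := by
        gcongr
    _ = ((s : ℝ) ^ s)⁻¹ * (n : ℝ) ^ s * Real.exp s * q ^ m * p ^ s := by
        ring
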